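/- Let S and T be disjoint finite sets of real numbers, with demand functions α : S → ℕ, β : T → ℕ and capacity functions on S and T, and let M be a minimum-cost matching between S and T satisfying the demands and capacities. If a, a′ ∈ S and b, b′ ∈ T are points with b′ < a′ < a < b such that (a, b′) ∈ M and (a′, b) ∈ M, then (a′, b′) ∈ M or (a, b) ∈ M. -/

import Mathlib

open Finset

/-- `M` is a matching between `S` and `T`: a finite set of ordered pairs `(s, t)`
with `s ∈ S` and `t ∈ T`. -/
def IsMatching (S T : Finset ℝ) (M : Finset (ℝ × ℝ)) : Prop :=
  ∀ p ∈ M, p.1 ∈ S ∧ p.2 ∈ T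

/-- The cost of a matching: the sum of `|s - t|` over its pairs. -/
noncomputable def matchCost (M : Finset (ℝ × ℝ)) : ℝ :=
  ∑ p ∈ M, |p.1 - p.2|

/-- The degree of a point `x`: the number of pairs of `M` containing `x`. -/
noncomputable def matchDeg (M : Finset (ℝ × ℝ)) (x : ℝ) : ℕ :=
  (M.filter (fun q => q.1 = x ∨ q.2 = x)).card

/-- `M` satisfies the demands `α` on `S` and `β` on `T`. -/
def SatisfiesDemands (S T : Finset ℝ) (α β : ℝ → ℕ) (M : Finset (ℝ × ℝ)) : Prop :=
  (∀ s ∈ S, α s ≤ matchDeg M s) ∧ (∀ t ∈ T, β t ≤ matchDeg M t)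

/-- `M` is a minimum-cost matching between `S` and `T` satisfying the demands. -/
def IsMinCostMatching (S T : Finset ℝ) (α β : ℝ → ℕ) (M : Finset (ℝ × ℝ)) : Prop :=
  IsMatching S T M ∧ SatisfiesDemands S T α β M ∧
    ∀ M' : Finset (ℝ × ℝ), IsMatching S T M' → SatisfiesDemands S T α β M' →
      matchCost M ≤ matchCost M'

/-- `M` satisfies the demands `α`, `β` and the capacities `CapS`, `CapT`. -/
def SatisfiesDemandsCaps (S T : Finset ℝ) (α β CapS CapT : ℝ → ℕ)
    (M : Finset (ℝ × ℝ)) : Prop :=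
  (∀ s ∈ S, α s ≤ matchDeg M s ∧ matchDeg M s ≤ CapS s) ∧
    (∀ t ∈ T, β t ≤ matchDeg M t ∧ matchDeg M t ≤ CapT t)

/-- `M` is a minimum-cost matching between `S` and `T` satisfying the demands
and capacities. -/
def IsMinCostMatchingCaps (S T : Finset ℝ) (α β CapS CapT : ℝ → ℕ)
    (M : Finset (ℝ × ℝ)) : Prop :=
  IsMatching S T M ∧ SatisfiesDemandsCaps S T α β CapS CapT M ∧
    ∀ M' : Finset (ℝ × ℝ), IsMatching S T M' →
      SatisfiesDemandsCaps S T α β CapS CapT M' →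
      matchCost M ≤ matchCost M'

/-- In a minimum-cost matching with demands and capacities, if `b′ < a′ < a < b`
with `(a, b′) ∈ M` and `(a′, b) ∈ M`, then `(a′, b′) ∈ M` or `(a, b) ∈ M`. -/
theorem stmt_3 (S T : Finset ℝ) (hST : Disjoint S T) (α β CapS CapT : ℝ → ℕ)
    (M : Finset (ℝ × ℝ)) (hM : IsMinCostMatchingCaps S T α β CapS CapT M)
    (a a' b b' : ℝ) (ha : a ∈ S) (ha' : a' ∈ S) (hb : b ∈ T) (hb' : b' ∈ T)
    (h1 : b' < a') (h2 : a' < a) (h3 : a < b)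
    (hab' : (a, b') ∈ M) (ha'b : (a', b) ∈ M) :
    (a', b') ∈ M ∨ (a, b) ∈ M := by
  
  by_contra hcon
  push_neg at hcon
  obtain ⟨hnb', hnb⟩ := hcon
  obtain ⟨hmatch, hdem, hmin⟩ := hM
  have hane : a ≠ a' := ne_of_gt h2
  have hbne : b ≠ b' := ne_of_gt (lt_trans h1 (lt_trans h2 h3))
  have hab : a ≠ b := ne_of_lt h3
  have hab'' : a ≠ b' := ne_of_gt (lt_trans h1 h2)
  have ha'bne : a' ≠ b := ne_of_lt (lt_trans h2 h3)
  have ha'b'ne : a' ≠ b' := ne_of_gt h1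
  set M0 : Finset (ℝ × ℝ) := (M.erase (a, b')).erase (a', b) with hM0
  have ha'bM1 : (a', b) ∈ M.erase (a, b') := by
    refine Finset.mem_erase.2 ⟨?_, ha'b⟩
    simp [hane.symm]
  have habninM0 : (a, b) ∉ M0 := fun h =>
    hnb (Finset.mem_of_mem_erase (Finset.mem_of_mem_erase h))
  have ha'b'ninM0 : (a', b') ∉ M0 := fun h =>
    hnb' (Finset.mem_of_mem_erase (Finset.mem_of_mem_erase h))
  set M' : Finset (ℝ × ℝ) := insert (a', b') (insert (a, b) M0) with hM'
  have hne2 : (a', b') ≠ (a, b) := by simp [hane.symm]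
  have ha'b'ninI : (a', b') ∉ insert (a, b) M0 := by
    simp [hne2, ha'b'ninM0]
  -- M' is a matching
  have hmatch' : IsMatching S T M' := by
    intro p hp
    rcases Finset.mem_insert.1 hp with h | h
    · subst h; exact ⟨ha', hb'⟩
    rcases Finset.mem_insert.1 h with h | h
    · subst h; exact ⟨ha, hb⟩
    · exact hmatch p (Finset.mem_of_mem_erase (Finset.mem_of_mem_erase h))
  -- degrees are unchanged
  have hdegZ : ∀ (N : Finset (ℝ × ℝ)) (x : ℝ), (matchDeg N x : ℤ) =
      ∑ q ∈ N, (if q.1 = x ∨ q.2 = x then (1 : ℤ) else 0) := by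
    intro N x
    unfold matchDeg
    rw [Finset.card_filter]
    push_cast
    simp
  have hdeg : ∀ x, matchDeg M' x = matchDeg M x := by
    intro x
    have : (matchDeg M' x : ℤ) = (matchDeg M x : ℤ) := by
      rw [hdegZ, hdegZ, hM', hM0]
      rw [Finset.sum_insert ha'b'ninI, Finset.sum_insert habninM0,
        Finset.sum_erase_eq_sub ha'bM1, Finset.sum_erase_eq_sub hab']
      simp only
      split_ifs <;> (try push_neg at *) <;> simp_all <;> ring
    exact_mod_cast this
  -- M' satisfies demands and capacities
  have hdem' : SatisfiesDemandsCaps S T α β CapS CapT M' := by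
    constructor
    · intro s hs; rw [hdeg]; exact hdem.1 s hs
    · intro t ht; rw [hdeg]; exact hdem.2 t ht
  -- cost comparison
  have hcost : matchCost M' = matchCost M - 2 * (a - a') := by
    unfold matchCost
    rw [hM', hM0]
    rw [Finset.sum_insert ha'b'ninI, Finset.sum_insert habninM0,
      Finset.sum_erase_eq_sub ha'bM1, Finset.sum_erase_eq_sub hab']
    simp only
    rw [abs_of_pos (show (0:ℝ) < a' - b' by linarith),
      abs_of_neg (show a - b < (0:ℝ) by linarith),
      abs_of_pos (show (0:ℝ) < a - b' by linarith),
      abs_of_neg (show a' - b < (0:ℝ) by linarith)]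
    ring
  have := hmin M' hmatch' hdem'
  rw [hcost] at this
  linarith
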